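/- arXiv:2305.08012 — 2 statements merged into one kernel-verified Lean document; each statement's English description precedes it below -/
import Mathlib

section
/- For the reset-to-mod LIF map with threshold θ > 0 and leak α ≥ 0 applied to any finite spike train η, the quantization error satisfies ‖LIF_{θ,α}(η) − η‖_{A,α} < θ, where LIF_{θ,α}(η) is the output spike train with amplitudes b_k = θ·q(v_k/θ) from the reset-to-mod recursion. -/
/-- Truncation-toward-zero quantization `q x = sgn(x)·⌊|x|⌋`. -/
noncomputable def q (x : ℝ) : ℤ := if 0 ≤ x then ⌊x⌋ else -⌊-x⌋

lemma abs_sub_q_lt_one (y : ℝ) : |y - (q y : ℝ)| < 1 := by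
  unfold q
  split_ifs with h
  · push_cast
    rw [abs_of_nonneg (by linarith [Int.floor_le y])]
    linarith [Int.lt_floor_add_one y]
  · push_cast
    rw [abs_of_nonpos (by linarith [Int.floor_le (-y)])]
    linarith [Int.lt_floor_add_one (-y)]

/-- Reset-to-mod LIF is a θ-quantization of the input spike train in the leaky
Alexiewicz norm: `‖LIF_{θ,α}(η) − η‖_{A,α} < θ`. -/
theorem reset_to_mod_LIF_quantization
    (N : ℕ) (hN : 1 ≤ N) (θ α : ℝ) (hθ : 0 < θ) (hα : 0 ≤ α) (t a u v b : ℕ → ℝ)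
    (ht : ∀ i j, 1 ≤ i → i ≤ j → j ≤ N → t i ≤ t j)
    (h0 : u 0 = 0)
    (hv : ∀ k, v (k + 1) = Real.exp (-α * (t (k + 1) - t k)) * u k + a (k + 1))
    (hb : ∀ k, b (k + 1) = θ * (q (v (k + 1) / θ) : ℝ))
    (hu : ∀ k, u (k + 1) = v (k + 1) - b (k + 1)) :
    (Finset.Icc 1 N).sup' (Finset.nonempty_Icc.mpr hN)
        (fun n => |∑ j ∈ Finset.Icc 1 n, (b j - a j) * Real.exp (-α * (t n - t j))|)
      < θ := by
  -- |u k| < θ for k ≥ 1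
  have hub : ∀ k, |u (k + 1)| < θ := by
    intro k
    have := abs_sub_q_lt_one (v (k + 1) / θ)
    have hq : u (k + 1) = θ * (v (k + 1) / θ - (q (v (k + 1) / θ) : ℝ)) := by
      rw [hu, hb]; field_simp
    rw [hq, abs_mul, abs_of_pos hθ]
    calc θ * |v (k + 1) / θ - (q (v (k + 1) / θ) : ℝ)| < θ * 1 := by
          exact mul_lt_mul_of_pos_left this hθ
      _ = θ := mul_one θ
  -- telescoping identity
  have key : ∀ n, ∑ j ∈ Finset.Icc 1 n, (b j - a j) * Real.exp (α * t j)
      = - u n * Real.exp (α * t n) := by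
    intro n
    induction n with
    | zero => simp [h0]
    | succ k ih =>
      rw [Finset.sum_Icc_succ_top (by omega), ih]
      have hterm : b (k + 1) - a (k + 1)
          = Real.exp (-α * (t (k + 1) - t k)) * u k - u (k + 1) := by
        have := hu k
        have := hv k
        linarith
      rw [hterm]
      have hexp : Real.exp (-α * (t (k + 1) - t k)) * Real.exp (α * t (k + 1))
          = Real.exp (α * t k) := by
        rw [← Real.exp_add]; ring_nf
      linear_combination u k * hexp
  rw [Finset.sup'_lt_iff]
  intro n hn
  simp only [Finset.mem_Icc] at hn
  have hsum : ∑ j ∈ Finset.Icc 1 n, (b j - a j) * Real.exp (-α * (t n - t j))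
      = Real.exp (-α * t n) * ∑ j ∈ Finset.Icc 1 n, (b j - a j) * Real.exp (α * t j) := by
    rw [Finset.mul_sum]
    apply Finset.sum_congr rfl
    intro j _
    rw [show -α * (t n - t j) = -α * t n + α * t j by ring, Real.exp_add]
    ring
  rw [hsum, key n]
  have : Real.exp (-α * t n) * (-u n * Real.exp (α * t n)) = -u n := by
    rw [show Real.exp (-α * t n) * (-u n * Real.exp (α * t n))
        = -u n * (Real.exp (-α * t n) * Real.exp (α * t n)) by ring,
      ← Real.exp_add]
    simp
  rw [this, abs_neg]
  obtain ⟨h1, _⟩ := hn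
  obtain ⟨m, rfl⟩ := Nat.exists_eq_add_of_le h1
  rw [add_comm]; exact hub m
end

section
/- When all input amplitudes satisfy |a_k| < θ, the reset-to-mod and reset-by-subtraction LIF recursions produce identical output spike trains. -/
lemma q_eval (θ v : ℝ) (hθ : 0 < θ) (hv : |v| < 2 * θ) :
    ((q (v / θ) : ℤ) : ℝ) = if θ ≤ |v| then Real.sign v else 0 := by
  rcases abs_lt.mp hv with ⟨h1, h2⟩
  unfold q
  by_cases hs : 0 ≤ v
  · rw [if_pos (div_nonneg hs hθ.le)]
    by_cases hθv : θ ≤ v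
    · have hfl : ⌊v / θ⌋ = 1 := by
        rw [Int.floor_eq_iff]
        constructor
        · rw [le_div_iff₀ hθ]; push_cast; linarith
        · rw [div_lt_iff₀ hθ]; push_cast; linarith
      rw [hfl, if_pos (by rwa [abs_of_nonneg hs]),
        Real.sign_of_pos (lt_of_lt_of_le hθ hθv)]
      norm_num
    · have hfl : ⌊v / θ⌋ = 0 := by
        rw [Int.floor_eq_iff]
        constructor
        · push_cast; exact div_nonneg hs hθ.le
        · rw [div_lt_iff₀ hθ]; push_cast; linarith [not_le.mp hθv]
      rw [hfl, if_neg (by rw [abs_of_nonneg hs]; exact hθv)]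
      norm_num
  · push_neg at hs
    rw [if_neg (by
      rw [not_le]
      exact div_neg_of_neg_of_pos hs hθ)]
    by_cases hθv : θ ≤ -v
    · have hfl : ⌊-(v / θ)⌋ = 1 := by
        rw [Int.floor_eq_iff]
        constructor
        · rw [neg_div', le_div_iff₀ hθ]; push_cast; linarith
        · rw [neg_div', div_lt_iff₀ hθ]; push_cast; linarith
      rw [neg_div'] at hfl ⊢
      rw [hfl, if_pos (by rwa [abs_of_neg hs]), Real.sign_of_neg hs]
      norm_num
    · have hfl : ⌊-(v / θ)⌋ = 0 := by
        rw [Int.floor_eq_iff]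
        constructor
        · push_cast
          rw [neg_div', le_div_iff₀ hθ]; linarith
        · rw [neg_div', div_lt_iff₀ hθ]; push_cast; linarith [not_le.mp hθv]
      rw [neg_div'] at hfl ⊢
      rw [hfl, if_neg (by rw [abs_of_neg hs]; exact hθv)]
      norm_num

lemma residual_lt (θ v : ℝ) (hθ : 0 < θ) (hv : |v| < 2 * θ) :
    |v - (if θ ≤ |v| then θ * Real.sign v else 0)| < θ := by
  rcases abs_lt.mp hv with ⟨h1, h2⟩
  by_cases hθv : θ ≤ |v|
  · rw [if_pos hθv]
    rcases lt_trichotomy v 0 with h | h | h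
    · rw [Real.sign_of_neg h, abs_of_neg h] at *
      rw [abs_lt]; constructor <;> nlinarith
    · simp [h] at hθv; linarith
    · rw [Real.sign_of_pos h, abs_of_pos h] at *
      rw [abs_lt]; constructor <;> nlinarith
  · rw [if_neg hθv]
    simpa using not_le.mp hθv

/-- With subthreshold input amplitudes, reset-to-mod and reset-by-subtraction
LIF produce identical outputs. -/
theorem reset_to_mod_eq_reset_by_subtraction_subthreshold
    (θ : ℝ) (hθ : 0 < θ) (β a u v b u' v' b' : ℕ → ℝ)
    (hβ : ∀ k, 0 < β k ∧ β k ≤ 1)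
    (ha : ∀ k, 1 ≤ k → |a k| < θ)
    -- reset-to-mod recursion
    (h0 : u 0 = 0)
    (hv : ∀ k, v (k + 1) = β k * u k + a (k + 1))
    (hb : ∀ k, b (k + 1) = θ * (q (v (k + 1) / θ) : ℝ))
    (hu : ∀ k, u (k + 1) = v (k + 1) - b (k + 1))
    -- reset-by-subtraction recursion
    (h0' : u' 0 = 0)
    (hv' : ∀ k, v' (k + 1) = β k * u' k + a (k + 1))
    (hb' : ∀ k, b' (k + 1) = if θ ≤ |v' (k + 1)| then θ * Real.sign (v' (k + 1)) else 0)
    (hu' : ∀ k, u' (k + 1) = v' (k + 1) - b' (k + 1)) :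
    ∀ k, 1 ≤ k → b k = b' k := by
  -- main invariant
  have key : ∀ k, u k = u' k ∧ |u k| < θ := by
    intro k
    induction k with
    | zero => refine ⟨by rw [h0, h0'], by rw [h0]; simpa using hθ⟩
    | succ n ih =>
      obtain ⟨heq, hlt⟩ := ih
      have hvv : v (n + 1) = v' (n + 1) := by rw [hv, hv', heq]
      have hvbnd : |v (n + 1)| < 2 * θ := by
        rw [hv]
        calc |β n * u n + a (n + 1)| ≤ |β n * u n| + |a (n + 1)| := abs_add_le _ _
          _ < 2 * θ := by
            have h1 : |β n * u n| = β n * |u n| := by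
              rw [abs_mul, abs_of_pos (hβ n).1]
            have h2 : β n * |u n| ≤ |u n| := by
              nlinarith [(hβ n).2, abs_nonneg (u n)]
            have h3 := ha (n + 1) (by omega)
            linarith [h1 ▸ h2]
      have hbb : b (n + 1) = b' (n + 1) := by
        rw [hb, hb', q_eval θ _ hθ hvbnd, hvv]
        split <;> [ring; ring]
      refine ⟨by rw [hu, hu', hvv, hbb], ?_⟩
      have : u (n + 1) = v (n + 1) - (if θ ≤ |v (n+1)| then θ * Real.sign (v (n+1)) else 0) := by
        rw [hu, hb, q_eval θ _ hθ hvbnd]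
        split <;> ring
      rw [this]
      exact residual_lt θ _ hθ hvbnd
  intro k hk
  obtain ⟨n, rfl⟩ : ∃ n, k = n + 1 := ⟨k - 1, by omega⟩
  obtain ⟨heq, hlt⟩ := key n
  have hvv : v (n + 1) = v' (n + 1) := by rw [hv, hv', heq]
  have hvbnd : |v (n + 1)| < 2 * θ := by
    rw [hv]
    calc |β n * u n + a (n + 1)| ≤ |β n * u n| + |a (n + 1)| := abs_add_le _ _
      _ < 2 * θ := by
        have h1 : |β n * u n| = β n * |u n| := by
          rw [abs_mul, abs_of_pos (hβ n).1]
        have h2 : β n * |u n| ≤ |u n| := by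
          nlinarith [(hβ n).2, abs_nonneg (u n)]
        have h3 := ha (n + 1) (by omega)
        linarith [h1 ▸ h2]
  rw [hb, hb', q_eval θ _ hθ hvbnd, hvv]
  split <;> ring
end
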